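/- Let ρ be a permutation of {1,…,n} with 312-height vector (h_1,…,h_n), and suppose ρ has exactly r occurrences of the pattern (3,1,2), where r ≥ 1. Then the total depth of down-jumps s = Σ_{i=1}^{n−1} max(h_i − h_{i+1} − 1, 0) satisfies 1 ≤ s ≤ r. (That is, a permutation with exactly r ≥ 1 occurrences of (3,1,2) is mapped by ψ_{(3,1,2)} to a generalized Dyck path with at least one and at most r down-jumps.) -/

import Mathlib

/-- The 312-height of entry `i` of `ρ`: the number of entries to the right of `i`
that are smaller than `ρ i`. -/
def height312 {n : ℕ} (ρ : Equiv.Perm (Fin n)) (i : Fin n) : ℕ :=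
  (Finset.univ.filter (fun k => i < k ∧ ρ k < ρ i)).card

open Finset

private lemma perm_lt_trichotomy {n : ℕ} (ρ : Equiv.Perm (Fin n)) {a b : Fin n} (h : a ≠ b) :
    ρ a < ρ b ∨ ρ b < ρ a :=
  (lt_or_gt_of_ne (fun he => h (ρ.injective he))).imp id id

private lemma height_diff {n : ℕ} (ρ : Equiv.Perm (Fin n)) (i j : Fin n)
    (hij : (j : ℕ) = (i : ℕ) + 1) :
    height312 ρ i - height312 ρ j - 1 =
      (univ.filter (fun c : Fin n => j < c ∧ ρ j < ρ c ∧ ρ c < ρ i)).card := by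
  classical
  have hiltj : i < j := by rw [Fin.lt_def]; omega
  by_cases hlt : ρ j < ρ i
  · have hA : univ.filter (fun k : Fin n => i < k ∧ ρ k < ρ i)
        = insert j ((univ.filter (fun k : Fin n => j < k ∧ ρ k < ρ j))
          ∪ (univ.filter (fun c : Fin n => j < c ∧ ρ j < ρ c ∧ ρ c < ρ i))) := by
      ext k
      simp only [mem_filter, mem_univ, true_and, mem_insert, mem_union]
      constructor
      · rintro ⟨hik, hki⟩
        by_cases hkj : k = j
        · exact Or.inl hkj
        · have hjk : j < k := by
            rw [Fin.lt_def] at hik ⊢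
            have := Fin.val_ne_of_ne hkj
            omega
          rcases perm_lt_trichotomy ρ hkj with h1 | h1
          · exact Or.inr (Or.inl ⟨hjk, h1⟩)
          · exact Or.inr (Or.inr ⟨hjk, h1, hki⟩)
      · rintro (rfl | ⟨hjk, hkj⟩ | ⟨hjk, _, hki⟩)
        · exact ⟨hiltj, hlt⟩
        · exact ⟨lt_trans hiltj hjk, lt_trans hkj hlt⟩
        · exact ⟨lt_trans hiltj hjk, hki⟩
    have hdisj : Disjoint (univ.filter (fun k : Fin n => j < k ∧ ρ k < ρ j))
        (univ.filter (fun c : Fin n => j < c ∧ ρ j < ρ c ∧ ρ c < ρ i)) := by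
      rw [disjoint_left]
      intro t ht1 ht2
      simp only [mem_filter] at ht1 ht2
      exact absurd (lt_trans ht1.2.2 ht2.2.2.1) (lt_irrefl _)
    have hjmem : j ∉ (univ.filter (fun k : Fin n => j < k ∧ ρ k < ρ j))
          ∪ (univ.filter (fun c : Fin n => j < c ∧ ρ j < ρ c ∧ ρ c < ρ i)) := by
      simp
    unfold height312
    rw [hA, card_insert_of_notMem hjmem, card_union_of_disjoint hdisj]
    omega
  · have hC : univ.filter (fun c : Fin n => j < c ∧ ρ j < ρ c ∧ ρ c < ρ i) = ∅ := by
      rw [filter_eq_empty_iff]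
      intro c _
      rintro ⟨_, h1, h2⟩
      exact hlt (lt_trans h1 h2)
    have hsub : univ.filter (fun k : Fin n => i < k ∧ ρ k < ρ i)
        ⊆ univ.filter (fun k : Fin n => j < k ∧ ρ k < ρ j) := by
      intro k hk
      simp only [mem_filter, mem_univ, true_and] at hk ⊢
      have hij' : ρ i < ρ j := by
        rcases perm_lt_trichotomy ρ (ne_of_lt hiltj) with h1 | h1
        · exact h1
        · exact absurd h1 hlt
      have hkj : k ≠ j := by
        rintro rfl
        exact hlt hk.2
      have hjk : j < k := by
        rw [Fin.lt_def] at hk ⊢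
        have := Fin.val_ne_of_ne hkj
        omega
      exact ⟨hjk, lt_trans hk.2 hij'⟩
    have := card_le_card hsub
    unfold height312
    rw [hC]
    simp only [card_empty]
    omega

theorem jumpsum_le_card_occurrences_312 {n r : ℕ} (hr : 1 ≤ r) (ρ : Equiv.Perm (Fin n))
    (h : ℕ → ℕ) (hh : ∀ i : Fin n, h (i : ℕ) = height312 ρ i)
    (hocc : (Finset.univ.filter (fun t : Fin n × Fin n × Fin n =>
        t.1 < t.2.1 ∧ t.2.1 < t.2.2 ∧ ρ t.2.1 < ρ t.2.2 ∧ ρ t.2.2 < ρ t.1)).card = r) :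
    1 ≤ ∑ i ∈ Finset.range (n - 1), (h i - h (i + 1) - 1) ∧
    ∑ i ∈ Finset.range (n - 1), (h i - h (i + 1) - 1) ≤ r := by
  classical
  set T : Finset (Fin n × Fin n × Fin n) :=
    Finset.univ.filter (fun t : Fin n × Fin n × Fin n =>
      t.1 < t.2.1 ∧ t.2.1 < t.2.2 ∧ ρ t.2.1 < ρ t.2.2 ∧ ρ t.2.2 < ρ t.1) with hT
  -- each term of the sum counts occurrences with prescribed first two indices
  have key : ∀ i ∈ Finset.range (n - 1), h i - h (i + 1) - 1 =
      (T.filter (fun t => (t.1 : ℕ) = i ∧ (t.2.1 : ℕ) = i + 1)).card := by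
    intro i hi
    rw [mem_range] at hi
    have hi1 : i < n := by omega
    have hi2 : i + 1 < n := by omega
    have e1 : h i = height312 ρ ⟨i, hi1⟩ := hh ⟨i, hi1⟩
    have e2 : h (i + 1) = height312 ρ ⟨i + 1, hi2⟩ := hh ⟨i + 1, hi2⟩
    rw [e1, e2, height_diff ρ ⟨i, hi1⟩ ⟨i + 1, hi2⟩ rfl]
    apply card_bij' (fun c _ => ((⟨i, hi1⟩ : Fin n), (⟨i + 1, hi2⟩ : Fin n), c))
      (fun t _ => t.2.2)
    · intro c hc
      simp only [mem_filter, mem_univ, true_and] at hc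
      rw [mem_filter, hT, mem_filter]
      exact ⟨⟨mem_univ _, Fin.mk_lt_mk.mpr (Nat.lt_succ_self i), hc.1, hc.2.1, hc.2.2⟩,
        rfl, rfl⟩
    · intro t ht
      simp only [hT, mem_filter, mem_univ, true_and] at ht ⊢
      obtain ⟨⟨h1, h2, h3, h4⟩, e1', e2'⟩ := ht
      have ha : t.1 = (⟨i, hi1⟩ : Fin n) := Fin.ext e1'
      have hb : t.2.1 = (⟨i + 1, hi2⟩ : Fin n) := Fin.ext e2'
      rw [ha] at h4
      rw [hb] at h2 h3
      exact ⟨h2, h3, h4⟩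
    · intro c hc; rfl
    · intro t ht
      simp only [hT, mem_filter, mem_univ, true_and] at ht
      obtain ⟨_, e1', e2'⟩ := ht
      exact Prod.ext (Fin.ext e1').symm (Prod.ext (Fin.ext e2').symm rfl)
  constructor
  · -- lower bound
    have hne : T.Nonempty := by
      rw [← card_pos, hocc]; omega
    obtain ⟨t, htT, hmin⟩ := T.exists_min_image (fun t => (t.2.1 : ℕ) - (t.1 : ℕ)) hne
    have htT' := htT
    rw [hT, mem_filter] at htT'
    obtain ⟨-, hab, hbc, h1, h2⟩ := htT'
    rw [Fin.lt_def] at hab hbc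
    -- show the minimal occurrence has consecutive first two indices
    have hb : (t.2.1 : ℕ) = (t.1 : ℕ) + 1 := by
      by_contra hne'
      have h2le : (t.1 : ℕ) + 2 ≤ (t.2.1 : ℕ) := by omega
      have hm : (t.1 : ℕ) + 1 < n := by
        have := t.2.1.isLt; omega
      obtain ⟨m, hmval⟩ : ∃ m : Fin n, (m : ℕ) = (t.1 : ℕ) + 1 := ⟨⟨_, hm⟩, rfl⟩
      have hmc : m < t.2.2 := by rw [Fin.lt_def]; omega
      rcases perm_lt_trichotomy ρ (ne_of_lt hmc) with hcase | hcase
      · have hmem : (t.1, m, t.2.2) ∈ T := by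
          rw [hT, mem_filter]
          refine ⟨mem_univ _, ?_, ?_, ?_, ?_⟩
          · show t.1 < m
            rw [Fin.lt_def]; omega
          · exact hmc
          · exact hcase
          · exact h2
        have hle : (t.2.1 : ℕ) - (t.1 : ℕ) ≤ (m : ℕ) - (t.1 : ℕ) := hmin _ hmem
        omega
      · have hmem : (m, t.2.1, t.2.2) ∈ T := by
          rw [hT, mem_filter]
          refine ⟨mem_univ _, ?_, ?_, ?_, ?_⟩
          · show m < t.2.1
            rw [Fin.lt_def]; omega
          · show t.2.1 < t.2.2
            rw [Fin.lt_def]; omega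
          · exact h1
          · exact hcase
        have hle : (t.2.1 : ℕ) - (t.1 : ℕ) ≤ (t.2.1 : ℕ) - (m : ℕ) := hmin _ hmem
        omega
    have harange : (t.1 : ℕ) ∈ Finset.range (n - 1) := by
      rw [mem_range]
      have := t.2.2.isLt
      omega
    have hterm : 1 ≤ h (t.1 : ℕ) - h ((t.1 : ℕ) + 1) - 1 := by
      rw [key _ harange]
      exact card_pos.mpr ⟨t, by rw [mem_filter]; exact ⟨htT, rfl, hb⟩⟩
    calc 1 ≤ h (t.1 : ℕ) - h ((t.1 : ℕ) + 1) - 1 := hterm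
      _ ≤ ∑ i ∈ Finset.range (n - 1), (h i - h (i + 1) - 1) :=
        Finset.single_le_sum (f := fun i => h i - h (i + 1) - 1)
          (fun i _ => Nat.zero_le _) harange
  · -- upper bound
    rw [Finset.sum_congr rfl key]
    have hdisj : ((Finset.range (n - 1) : Finset ℕ) : Set ℕ).PairwiseDisjoint
        (fun i => T.filter (fun t => (t.1 : ℕ) = i ∧ (t.2.1 : ℕ) = i + 1)) := by
      intro i _ j _ hij
      simp only [Function.onFun, disjoint_left]
      intro t ht1 ht2
      rw [mem_filter] at ht1 ht2
      exact hij (ht1.2.1.symm.trans ht2.2.1)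
    rw [← Finset.card_biUnion hdisj]
    rw [← hocc]
    apply card_le_card
    intro t ht
    rw [mem_biUnion] at ht
    obtain ⟨i, _, hti⟩ := ht
    rw [mem_filter] at hti
    exact hti.1
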